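/- Let (L, F) be a filtered cochain complex of abelian groups with Dec(F)^p L^l := { x ∈ F^{p+l} L^l : d x ∈ F^{p+l+1} L^{l+1} }. For any filtration by subcomplexes G of L, let G^p H^l(L) denote the image of H^l(G^p L) → H^l(L). Then for all integers p and l, Dec(F)^p H^l(L) = F^{p+l} H^l(L) as subgroups of H^l(L). -/

import Mathlib

set_option linter.unusedVariables false


/-! Basic theory of cochain complexes of abelian groups, indexed by `ℤ`,
with subcomplexes, quotient complexes, cohomology and induced maps. -/

/-- A cochain complex of abelian groups indexed by `ℤ`. -/
structure Cochain : Type 1 where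
  X : ℤ → Type
  inst : ∀ l, AddCommGroup (X l)
  d : ∀ l, X l →+ X (l + 1)
  dd : ∀ l (x : X l), d (l + 1) (d l x) = 0

attribute [instance] Cochain.inst

namespace Cochain

variable (L M : Cochain)

/-- Transport along an equality of degrees. -/
def castAdd {a b : ℤ} (h : a = b) : L.X a ≃+ L.X b := by
  subst h; exact AddEquiv.refl _

@[simp] theorem castAdd_rfl {a : ℤ} (x : L.X a) : L.castAdd rfl x = x := rfl

/-- Cocycles in degree `l`. -/
def cocycles (l : ℤ) : AddSubgroup (L.X l) := (L.d l).ker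

/-- Coboundaries in degree `l`. -/
def bdry (l : ℤ) : AddSubgroup (L.X l) :=
  ((L.castAdd (show l - 1 + 1 = l by ring)).toAddMonoidHom.comp (L.d (l - 1))).range

/-- Cohomology in degree `l`: cocycles modulo coboundaries. -/
abbrev H (l : ℤ) : Type := ↥(L.cocycles l) ⧸ (L.bdry l).addSubgroupOf (L.cocycles l)

/-- The projection from cocycles onto cohomology. -/
abbrev Hmk (l : ℤ) : ↥(L.cocycles l) →+ L.H l := QuotientAddGroup.mk' _

/-- A morphism of cochain complexes. -/
structure Hom (L M : Cochain) where
  f : ∀ l, L.X l →+ M.X l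
  comm : ∀ l (x : L.X l), f (l + 1) (L.d l x) = M.d l (f l x)

variable {L M}

theorem Hom.cast_natural (φ : Hom L M) {a b : ℤ} (h : a = b) (x : L.X a) :
    φ.f b (L.castAdd h x) = M.castAdd h (φ.f a x) := by subst h; rfl

theorem mem_bdry_map (φ : Hom L M) (l : ℤ) {x : L.X l} (hx : x ∈ L.bdry l) :
    φ.f l x ∈ M.bdry l := by
  obtain ⟨y, hy⟩ := hx
  refine ⟨φ.f (l - 1) y, ?_⟩
  simp only [AddMonoidHom.comp_apply, AddEquiv.coe_toAddMonoidHom] at hy ⊢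
  rw [← hy, φ.cast_natural, φ.comm]

/-- The map induced on cocycles by a morphism of complexes. -/
def Hom.cocyclesMap (φ : Hom L M) (l : ℤ) : ↥(L.cocycles l) →+ ↥(M.cocycles l) :=
  AddMonoidHom.codRestrict ((φ.f l).domRestrict (L.cocycles l)) (M.cocycles l) (fun x => by
    have hx : L.d l x.1 = 0 := x.2
    show M.d l (φ.f l x.1) = 0
    rw [← φ.comm l x.1, hx, map_zero])

/-- The map induced on cohomology by a morphism of complexes. -/
def Hom.Hmap (φ : Hom L M) (l : ℤ) : L.H l →+ M.H l :=
  QuotientAddGroup.lift _ ((M.Hmk l).comp (φ.cocyclesMap l)) (fun x hx => by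
    have hx' : (x : L.X l) ∈ L.bdry l := AddSubgroup.mem_addSubgroupOf.mp hx
    have : (φ.cocyclesMap l x : M.X l) ∈ M.bdry l := mem_bdry_map φ l hx'
    simpa using (QuotientAddGroup.eq_zero_iff _).2 (AddSubgroup.mem_addSubgroupOf.mpr this))

variable (L)

/-- A family of subgroups is a subcomplex if it is stable under the differential. -/
def IsSubcomplex (S : ∀ l, AddSubgroup (L.X l)) : Prop :=
  ∀ l, ∀ x ∈ S l, L.d l x ∈ S (l + 1)

/-- The subcomplex determined by a `d`-stable family of subgroups. -/
def sub (S : ∀ l, AddSubgroup (L.X l)) (hS : L.IsSubcomplex S) : Cochain where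
  X l := S l
  inst l := inferInstance
  d l := AddMonoidHom.codRestrict ((L.d l).domRestrict (S l)) (S (l + 1))
    (fun x => hS l x.1 x.2)
  dd l x := Subtype.ext (L.dd l x.1)

/-- The inclusion of a subcomplex. -/
def subIncl (S : ∀ l, AddSubgroup (L.X l)) (hS : L.IsSubcomplex S) :
    Hom (L.sub S hS) L where
  f l := (S l).subtype
  comm _ _ := rfl

/-- The quotient complex by a subcomplex. -/
def quot (S : ∀ l, AddSubgroup (L.X l)) (hS : L.IsSubcomplex S) : Cochain where
  X l := L.X l ⧸ S l
  inst l := inferInstance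
  d l := QuotientAddGroup.lift (S l) ((QuotientAddGroup.mk' (S (l + 1))).comp (L.d l))
    (fun x hx => by simpa using (QuotientAddGroup.eq_zero_iff _).2 (hS l x hx))
  dd l x := QuotientAddGroup.induction_on x (fun y => by
    simp only [QuotientAddGroup.lift_mk, AddMonoidHom.comp_apply,
      QuotientAddGroup.mk'_apply, QuotientAddGroup.lift_mk, L.dd]
    rfl)

/-- The projection onto a quotient complex. -/
def quotHom (S : ∀ l, AddSubgroup (L.X l)) (hS : L.IsSubcomplex S) :
    Hom L (L.quot S hS) where
  f l := QuotientAddGroup.mk' (S l)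
  comm l x := by
    simp only [quot, QuotientAddGroup.mk'_apply, QuotientAddGroup.lift_mk,
      AddMonoidHom.comp_apply]
    rfl

/-- The filtration induced on cohomology by a subcomplex: the image of
`H^l(S) → H^l(L)`. -/
def imageInH (S : ∀ l, AddSubgroup (L.X l)) (hS : L.IsSubcomplex S) (l : ℤ) :
    AddSubgroup (L.H l) :=
  ((L.subIncl S hS).Hmap l).range

variable {L}

/-- Restriction of a morphism of complexes to subcomplexes. -/
def Hom.restrictHom (φ : Hom L M) (S : ∀ l, AddSubgroup (L.X l))
    (T : ∀ l, AddSubgroup (M.X l)) (hS : L.IsSubcomplex S) (hT : M.IsSubcomplex T)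
    (h : ∀ l, ∀ x ∈ S l, φ.f l x ∈ T l) :
    Hom (L.sub S hS) (M.sub T hT) where
  f l := AddMonoidHom.codRestrict ((φ.f l).domRestrict (S l)) (T l) (fun x => h l x.1 x.2)
  comm l x := Subtype.ext (φ.comm l x.1)

/-- Descent of a morphism of complexes to quotient complexes. -/
def Hom.descendHom (φ : Hom L M) (S : ∀ l, AddSubgroup (L.X l))
    (T : ∀ l, AddSubgroup (M.X l)) (hS : L.IsSubcomplex S) (hT : M.IsSubcomplex T)
    (h : ∀ l, ∀ x ∈ S l, φ.f l x ∈ T l) :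
    Hom (L.quot S hS) (M.quot T hT) where
  f l := QuotientAddGroup.map (S l) (T l) (φ.f l) (fun x hx => h l x hx)
  comm l x := QuotientAddGroup.induction_on x (fun y => by
    simp only [quot, QuotientAddGroup.lift_mk, QuotientAddGroup.map_mk,
      QuotientAddGroup.mk'_apply, AddMonoidHom.comp_apply, φ.comm]
    exact congrArg (QuotientAddGroup.mk' _) (φ.comm l y))

end Cochain
namespace Cochain

variable (L M : Cochain)

theorem IsSubcomplex.inf {L : Cochain} {S T : ∀ l, AddSubgroup (L.X l)}
    (hS : L.IsSubcomplex S) (hT : L.IsSubcomplex T) :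
    L.IsSubcomplex (fun l => S l ⊓ T l) := fun l x hx =>
  AddSubgroup.mem_inf.2 ⟨hS l x (AddSubgroup.mem_inf.1 hx).1, hT l x (AddSubgroup.mem_inf.1 hx).2⟩

theorem IsSubcomplex.sup {L : Cochain} {S T : ∀ l, AddSubgroup (L.X l)}
    (hS : L.IsSubcomplex S) (hT : L.IsSubcomplex T) :
    L.IsSubcomplex (fun l => S l ⊔ T l) := by
  intro l x hx
  rw [AddSubgroup.mem_sup] at hx ⊢
  obtain ⟨y, hy, z, hz, rfl⟩ := hx
  exact ⟨L.d l y, hS l y hy, L.d l z, hT l z hz, (map_add _ _ _).symm⟩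

theorem ker_isSubcomplex {L M : Cochain} (φ : Hom L M) :
    L.IsSubcomplex (fun l => (φ.f l).ker) := by
  intro l x hx
  rw [AddMonoidHom.mem_ker] at hx ⊢
  rw [φ.comm l x, hx, map_zero]

/-- The graded piece `S/T` of two nested subcomplexes, as a cochain complex. -/
def GrCochain (L : Cochain) (S T : ∀ l, AddSubgroup (L.X l)) (hS : L.IsSubcomplex S)
    (hT : L.IsSubcomplex T) (_hle : ∀ l, T l ≤ S l) : Cochain :=
  (L.sub S hS).quot (fun l => (T l).addSubgroupOf (S l)) (fun l x hx =>
    AddSubgroup.mem_addSubgroupOf.2 (hT l x.1 (AddSubgroup.mem_addSubgroupOf.1 hx)))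

/-- The morphism induced on graded pieces by a filtered morphism of complexes. -/
def Hom.grHom {L M : Cochain} (φ : Hom L M) (S T : ∀ l, AddSubgroup (L.X l))
    (S' T' : ∀ l, AddSubgroup (M.X l)) (hS : L.IsSubcomplex S) (hT : L.IsSubcomplex T)
    (hS' : M.IsSubcomplex S') (hT' : M.IsSubcomplex T')
    (hle : ∀ l, T l ≤ S l) (hle' : ∀ l, T' l ≤ S' l)
    (h1 : ∀ l, ∀ x ∈ S l, φ.f l x ∈ S' l) (h2 : ∀ l, ∀ x ∈ T l, φ.f l x ∈ T' l) :
    Hom (GrCochain L S T hS hT hle) (GrCochain M S' T' hS' hT' hle') :=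
  (φ.restrictHom S S' hS hS' h1).descendHom _ _ _ _
    (fun l x hx => AddSubgroup.mem_addSubgroupOf.2
      (h2 l x.1 (AddSubgroup.mem_addSubgroupOf.1 hx)))

/-- The shifted (décalée) filtration `Dec(F)`:
`Dec(F)^p L^l = { x ∈ F^{p+l} L^l : d x ∈ F^{p+l+1} L^{l+1} }`. -/
def decF (L : Cochain) (F : ℤ → ∀ l, AddSubgroup (L.X l)) (p l : ℤ) :
    AddSubgroup (L.X l) :=
  F (p + l) l ⊓ (F (p + l + 1) (l + 1)).comap (L.d l)

theorem decF_isSubcomplex (L : Cochain) (F : ℤ → ∀ l, AddSubgroup (L.X l)) (p : ℤ) :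
    L.IsSubcomplex (fun l => decF L F p l) := by
  intro l x hx
  simp only [decF, AddSubgroup.mem_inf, AddSubgroup.mem_comap] at hx ⊢
  refine ⟨?_, ?_⟩
  · have h : p + (l + 1) = p + l + 1 := by ring
    rw [h]
    exact hx.2
  · rw [L.dd]
    exact zero_mem _

theorem decF_mono (L : Cochain) (F : ℤ → ∀ l, AddSubgroup (L.X l))
    (hdec : ∀ p l, F (p + 1) l ≤ F p l) (p l : ℤ) :
    decF L F (p + 1) l ≤ decF L F p l := by
  intro x hx
  simp only [decF, AddSubgroup.mem_inf, AddSubgroup.mem_comap] at hx ⊢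
  have e1 : p + 1 + l = p + l + 1 := by ring
  rw [e1] at hx
  exact ⟨hdec (p + l) l hx.1, hdec (p + l + 1) (l + 1) hx.2⟩

/-- The iterated graded piece `Gr^a_F Gr^b_G L`, as a cochain complex:
`(F^a ∩ G^b) / (F^{a+1} ∩ G^b + F^a ∩ G^{b+1})`. -/
def GrGrCochain (L : Cochain) (F G : ℤ → ∀ l, AddSubgroup (L.X l))
    (hFsub : ∀ p, L.IsSubcomplex (F p)) (hGsub : ∀ p, L.IsSubcomplex (G p))
    (hFdec : ∀ p l, F (p + 1) l ≤ F p l) (hGdec : ∀ p l, G (p + 1) l ≤ G p l)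
    (a b : ℤ) : Cochain :=
  GrCochain L (fun l => F a l ⊓ G b l)
    (fun l => (F (a + 1) l ⊓ G b l) ⊔ (F a l ⊓ G (b + 1) l))
    (IsSubcomplex.inf (hFsub a) (hGsub b))
    (IsSubcomplex.sup (IsSubcomplex.inf (hFsub (a + 1)) (hGsub b))
      (IsSubcomplex.inf (hFsub a) (hGsub (b + 1))))
    (fun l => sup_le (inf_le_inf_right _ (hFdec a l)) (inf_le_inf_left _ (hGdec b l)))

end Cochain

namespace Cochain

/-- A class lies in the induced filtration iff it is represented by a cocycle in `S l`. -/
theorem mem_imageInH (L : Cochain) (S : ∀ l, AddSubgroup (L.X l)) (hS : L.IsSubcomplex S)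
    (l : ℤ) (y : L.H l) :
    y ∈ imageInH L S hS l ↔ ∃ x : ↥(L.cocycles l), x.1 ∈ S l ∧ L.Hmk l x = y := by
  constructor
  · rintro ⟨z, rfl⟩
    induction z using QuotientAddGroup.induction_on with
    | H w =>
      have hw : L.d l w.1.1 = 0 := congrArg Subtype.val w.2
      exact ⟨⟨w.1.1, hw⟩, w.1.2, rfl⟩
  · rintro ⟨x, hxS, rfl⟩
    have hw : ((L.sub S hS).d l) ⟨x.1, hxS⟩ = 0 := Subtype.ext (x.2 : L.d l x.1 = 0)
    exact ⟨(L.sub S hS).Hmk l ⟨⟨x.1, hxS⟩, hw⟩, rfl⟩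

end Cochain

open Cochain in
/-- For a filtered cochain complex `(L, F)` of abelian groups with shifted
filtration `Dec(F)^p L^l = { x ∈ F^{p+l} L^l : d x ∈ F^{p+l+1} L^{l+1} }`, the induced
filtrations on cohomology (images of `H^l(G^p L) → H^l(L)`) satisfy
`Dec(F)^p H^l(L) = F^{p+l} H^l(L)` as subgroups of `H^l(L)`. -/
theorem dec_filtration_on_cohomology (L : Cochain)
    (F : ℤ → ∀ l, AddSubgroup (L.X l))
    (hdec : ∀ p l, F (p + 1) l ≤ F p l)
    (hsub : ∀ p, L.IsSubcomplex (F p))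
    (hfin : ∀ l : ℤ, ∃ a b : ℤ, a ≤ b ∧ F a l = ⊤ ∧ F b l = ⊥)
    (p l : ℤ) :
    imageInH L (fun l' => decF L F p l') (decF_isSubcomplex L F p) l
      = imageInH L (F (p + l)) (hsub (p + l)) l := by
  ext y
  rw [mem_imageInH, mem_imageInH]
  constructor
  · rintro ⟨x, hx, rfl⟩
    exact ⟨x, (AddSubgroup.mem_inf.1 hx).1, rfl⟩
  · rintro ⟨x, hx, rfl⟩
    refine ⟨x, AddSubgroup.mem_inf.2 ⟨hx, ?_⟩, rfl⟩
    rw [AddSubgroup.mem_comap, (x.2 : L.d l x.1 = 0)]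
    exact zero_mem _
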